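/- arXiv:1811.11627 — 4 statements merged into one kernel-verified Lean document; each statement's English description precedes it below -/
import Mathlib

section
/- Let L be a positive integer, let z ∈ ℂ^L, γ ∈ ℝ^L, x̄ ∈ ℂ^L and c ∈ ℝ. Suppose that for every index l one has Re(z_l)·cos(γ_l) + Im(z_l)·sin(γ_l) = 1, and that Re⟨x̄, z⟩ ≥ c. Define γ'_l := 2·arg(z_l) − γ_l and x̄'_l := |x̄_l|·exp(i·arg(z_l)) for every l. Then for every l one has Re(z_l)·cos(γ'_l) + Im(z_l)·sin(γ'_l) = 1, and Re⟨x̄', z⟩ ≥ c. (This is Lemma 1 of the paper: the feasible set of problem CP^(n), defined by the updated tangent-line equality constraints and the phase-realigned spectral inequality constraint, contains the optimal solution of problem CP^(n−1).) -/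
open Complex in
/-- Lemma 1 of the paper: the feasible set of `CP^(n)`, defined by the
updated tangent-line equality constraints (with `γ'_l = 2·arg(z_l) − γ_l`) and the
phase-realigned spectral inequality constraint (with `x̄'_l = |x̄_l|·exp(i·arg(z_l))`),
contains the previous optimal solution `z`. -/
theorem stmt_0 (L : ℕ) (hL : 0 < L) (z : Fin L → ℂ) (γ : Fin L → ℝ)
    (xbar : Fin L → ℂ) (c : ℝ)
    (heq : ∀ l, (z l).re * Real.cos (γ l) + (z l).im * Real.sin (γ l) = 1)
    (hineq : c ≤ (∑ l, (starRingEnd ℂ) (xbar l) * z l).re) :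
    (∀ l, (z l).re * Real.cos (2 * (z l).arg - γ l)
        + (z l).im * Real.sin (2 * (z l).arg - γ l) = 1) ∧
    c ≤ (∑ l, (starRingEnd ℂ) (((‖xbar l‖ : ℝ) : ℂ)
        * Complex.exp (Complex.I * (z l).arg)) * z l).re := by
  have key : ∀ l, (z l).re = ‖z l‖ * Real.cos ((z l).arg)
      ∧ (z l).im = ‖z l‖ * Real.sin ((z l).arg) := by
    intro l
    have h := Complex.norm_mul_cos_add_sin_mul_I (z l)
    constructor
    · have := congrArg Complex.re h
      simpa using this.symm
    · have := congrArg Complex.im h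
      simpa using this.symm
  constructor
  · intro l
    obtain ⟨ha, hb⟩ := key l
    have h1 := heq l
    have hpy := Real.sin_sq_add_cos_sq ((z l).arg)
    rw [Real.cos_sub, Real.sin_sub, Real.cos_two_mul, Real.sin_two_mul]
    rw [ha, hb] at h1 ⊢
    linear_combination h1 + 2 * ‖z l‖ * Real.cos ((z l).arg)
      * Real.cos (γ l) * hpy
  · calc c ≤ (∑ l, (starRingEnd ℂ) (xbar l) * z l).re := hineq
      _ = ∑ l, ((starRingEnd ℂ) (xbar l) * z l).re := by
          rw [Complex.re_sum]
      _ ≤ ∑ l, ((starRingEnd ℂ) (((‖xbar l‖ : ℝ) : ℂ)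
            * Complex.exp (Complex.I * (z l).arg)) * z l).re := by
          apply Finset.sum_le_sum
          intro l _
          have h1 : ((starRingEnd ℂ) (((‖xbar l‖ : ℝ) : ℂ)
              * Complex.exp (Complex.I * (z l).arg)) * z l).re
              = ‖xbar l‖ * ‖z l‖ := by
            set θ : ℝ := (z l).arg with hθ
            have hz := Complex.norm_mul_exp_arg_mul_I (z l)
            rw [← hθ] at hz
            have e1 : (starRingEnd ℂ) (((‖xbar l‖ : ℝ) : ℂ)
                * Complex.exp (Complex.I * θ))
                = ((‖xbar l‖ : ℝ) : ℂ)
                  * Complex.exp (-((θ : ℂ) * Complex.I)) := by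
              rw [map_mul, ← Complex.exp_conj, map_mul, Complex.conj_I, Complex.conj_ofReal,
                Complex.conj_ofReal]
              ring_nf
            rw [e1, ← hz, show ((‖xbar l‖ : ℝ) : ℂ)
                * Complex.exp (-((θ : ℂ) * Complex.I))
                * (((‖z l‖ : ℝ) : ℂ) * Complex.exp ((θ : ℂ) * Complex.I))
                = ((‖xbar l‖ : ℝ) : ℂ) * ((‖z l‖ : ℝ) : ℂ)
                  * Complex.exp (-((θ : ℂ) * Complex.I) + (θ : ℂ) * Complex.I)
                from by rw [Complex.exp_add]; ring]
            simp
          have h2 : ((starRingEnd ℂ) (xbar l) * z l).re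
              ≤ ‖xbar l‖ * ‖z l‖ := by
            calc ((starRingEnd ℂ) (xbar l) * z l).re
                ≤ ‖(starRingEnd ℂ) (xbar l) * z l‖ := Complex.re_le_norm _
              _ = ‖xbar l‖ * ‖z l‖ := by
                  rw [norm_mul, Complex.norm_conj]
          rw [h1]; exact h2
      _ = _ := by rw [← Complex.re_sum]
end

section
/- Let R̄ be a real symmetric positive definite d×d matrix, let B be a real m×d matrix such that B·R̄⁻¹·Bᵀ is invertible, let s̄ ∈ ℝ^d, and let c ∈ ℝ. Define ŝ := R̄⁻¹·Bᵀ·(B·R̄⁻¹·Bᵀ)⁻¹·𝟏 (where 𝟏 is the all-ones vector in ℝ^m) and α := −s̄ᵀ·(R̄⁻¹ − R̄⁻¹·Bᵀ·(B·R̄⁻¹·Bᵀ)⁻¹·B·R̄⁻¹)·s̄. Assume that s̄ does not lie in the column space of Bᵀ (equivalently, s̄ is not a linear combination of the rows of B). If s̄ᵀ·ŝ − c < 0, then μ := (s̄ᵀ·ŝ − c)/α satisfies μ > 0. -/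
open Matrix

/-- Lemma 2 of the paper: if the equality-constrained solution `ŝ`
violates the inequality constraint `s̄ᵀs ≥ c`, then the Lagrange multiplier
`μ = (s̄ᵀŝ − c)/α` is strictly positive. -/
theorem stmt_3 (d m : ℕ) (Rbar : Matrix (Fin d) (Fin d) ℝ) (hR : Rbar.PosDef)
    (B : Matrix (Fin m) (Fin d) ℝ) (hB : IsUnit (B * Rbar⁻¹ * Bᵀ))
    (sbar : Fin d → ℝ) (c : ℝ)
    (hspan : ¬ ∃ v : Fin m → ℝ, Bᵀ *ᵥ v = sbar)
    (shat : Fin d → ℝ)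
    (hshat : shat = (Rbar⁻¹ * Bᵀ * (B * Rbar⁻¹ * Bᵀ)⁻¹) *ᵥ (fun _ => 1))
    (α : ℝ)
    (hα : α = -(sbar ⬝ᵥ ((Rbar⁻¹ - Rbar⁻¹ * Bᵀ * (B * Rbar⁻¹ * Bᵀ)⁻¹ * B * Rbar⁻¹) *ᵥ sbar)))
    (hviol : sbar ⬝ᵥ shat - c < 0) :
    0 < (sbar ⬝ᵥ shat - c) / α := by
  set M := Rbar⁻¹ with hM
  have hMpd : M.PosDef := hR.inv
  have hMsymm : Mᵀ = M := by simpa using hMpd.isHermitian.eq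
  have hcancel : ∀ u : Fin m → ℝ, (B * M * Bᵀ) *ᵥ ((B * M * Bᵀ)⁻¹ *ᵥ u) = u := by
    intro u
    rw [mulVec_mulVec, Matrix.mul_nonsing_inv _ ((isUnit_iff_isUnit_det _).mp hB), one_mulVec]
  set w : Fin m → ℝ := (B * M * Bᵀ)⁻¹ *ᵥ (B *ᵥ (M *ᵥ sbar)) with hw
  set z : Fin d → ℝ := sbar - Bᵀ *ᵥ w with hz
  have hzne : z ≠ 0 := fun h => hspan ⟨w, (sub_eq_zero.mp h).symm⟩
  have hsym : ∀ a b : Fin d → ℝ, a ⬝ᵥ (M *ᵥ b) = b ⬝ᵥ (M *ᵥ a) := by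
    intro a b
    rw [Matrix.dotProduct_mulVec, ← Matrix.mulVec_transpose, hMsymm, dotProduct_comm]
  have hT : ∀ (v : Fin m → ℝ) (u : Fin d → ℝ), (Bᵀ *ᵥ v) ⬝ᵥ u = v ⬝ᵥ (B *ᵥ u) := by
    intro v u
    rw [Matrix.dotProduct_mulVec, ← Matrix.mulVec_transpose]
  have h1 : (B * M * Bᵀ) *ᵥ w = B *ᵥ (M *ᵥ sbar) := hcancel _
  have e2 : (Bᵀ *ᵥ w) ⬝ᵥ (M *ᵥ sbar) = sbar ⬝ᵥ (M *ᵥ (Bᵀ *ᵥ w)) := hsym _ _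
  have e1 : (Bᵀ *ᵥ w) ⬝ᵥ (M *ᵥ (Bᵀ *ᵥ w)) = sbar ⬝ᵥ (M *ᵥ (Bᵀ *ᵥ w)) := by
    rw [hT, ← e2, hT]
    congr 1
    rw [mulVec_mulVec, mulVec_mulVec]
    exact h1
  have e3 : (M * Bᵀ * (B * M * Bᵀ)⁻¹ * B * M) *ᵥ sbar = M *ᵥ (Bᵀ *ᵥ w) := by
    rw [hw]
    simp only [mulVec_mulVec, Matrix.mul_assoc]
  have key : sbar ⬝ᵥ ((M - M * Bᵀ * (B * M * Bᵀ)⁻¹ * B * M) *ᵥ sbar) = z ⬝ᵥ (M *ᵥ z) := by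
    rw [sub_mulVec, dotProduct_sub, e3, hz, sub_dotProduct, mulVec_sub, dotProduct_sub,
      dotProduct_sub, e1, e2]
    ring
  have hpos : 0 < z ⬝ᵥ (M *ᵥ z) := by
    have := hMpd.dotProduct_mulVec_pos hzne
    simpa using this
  have hαneg : α < 0 := by rw [hα, key]; linarith
  exact div_pos_of_neg_of_neg hviol hαneg
end

section
/- Let R̄ be a real symmetric positive definite d×d matrix, let B be a real m×d matrix such that B·R̄⁻¹·Bᵀ is invertible, and let s̄ ∈ ℝ^d. If s̄ does not lie in the column space of Bᵀ, then the inequality is strict: s̄ᵀ·R̄⁻¹·s̄ > s̄ᵀ·R̄⁻¹·Bᵀ·(B·R̄⁻¹·Bᵀ)⁻¹·B·R̄⁻¹·s̄; equivalently, α := −s̄ᵀ·(R̄⁻¹ − R̄⁻¹·Bᵀ·(B·R̄⁻¹·Bᵀ)⁻¹·B·R̄⁻¹)·s̄ satisfies α < 0. -/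
open Matrix

/-- if `s̄` is not in the column space of `Bᵀ`, the Schur-complement
inequality is strict: `s̄ᵀ·R̄⁻¹·s̄ > s̄ᵀ·R̄⁻¹·Bᵀ·(B·R̄⁻¹·Bᵀ)⁻¹·B·R̄⁻¹·s̄`, i.e. `α < 0`. -/
theorem stmt_5 (d m : ℕ) (Rbar : Matrix (Fin d) (Fin d) ℝ) (hR : Rbar.PosDef)
    (B : Matrix (Fin m) (Fin d) ℝ) (hB : IsUnit (B * Rbar⁻¹ * Bᵀ))
    (sbar : Fin d → ℝ)
    (hspan : ¬ ∃ v : Fin m → ℝ, Bᵀ *ᵥ v = sbar) :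
    sbar ⬝ᵥ ((Rbar⁻¹ * Bᵀ * (B * Rbar⁻¹ * Bᵀ)⁻¹ * B * Rbar⁻¹) *ᵥ sbar)
      < sbar ⬝ᵥ (Rbar⁻¹ *ᵥ sbar) ∧
    -(sbar ⬝ᵥ ((Rbar⁻¹ - Rbar⁻¹ * Bᵀ * (B * Rbar⁻¹ * Bᵀ)⁻¹ * B * Rbar⁻¹) *ᵥ sbar)) < 0 := by
  set Rinv := Rbar⁻¹ with hRinv
  set S := B * Rinv * Bᵀ with hS
  have hRpd : Rinv.PosDef := hR.inv
  have hRsymm : Rinvᵀ = Rinv := hRpd.isHermitian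
  have hsymm : ∀ x y : Fin d → ℝ, x ⬝ᵥ (Rinv *ᵥ y) = y ⬝ᵥ (Rinv *ᵥ x) := by
    intro x y
    rw [Matrix.dotProduct_mulVec, ← Matrix.mulVec_transpose, hRsymm, dotProduct_comm]
  set v : Fin m → ℝ := S⁻¹ *ᵥ (B *ᵥ (Rinv *ᵥ sbar)) with hv
  set u : Fin d → ℝ := sbar - Bᵀ *ᵥ v with hu
  have hune : u ≠ 0 := by
    intro h
    exact hspan ⟨v, by rw [eq_comm, ← sub_eq_zero]; exact h⟩
  have hMs : (Rinv * Bᵀ * S⁻¹ * B * Rinv) *ᵥ sbar = Rinv *ᵥ (Bᵀ *ᵥ v) := by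
    simp only [hv, ← Matrix.mulVec_mulVec]
  have hSv : S *ᵥ v = B *ᵥ (Rinv *ᵥ sbar) := by
    rw [hv, Matrix.mulVec_mulVec, Matrix.mul_nonsing_inv _ ((Matrix.isUnit_iff_isUnit_det S).mp hB),
      Matrix.one_mulVec]
  have key : (Bᵀ *ᵥ v) ⬝ᵥ (Rinv *ᵥ (Bᵀ *ᵥ v)) = sbar ⬝ᵥ (Rinv *ᵥ (Bᵀ *ᵥ v)) := by
    have h1 : (Bᵀ *ᵥ v) ⬝ᵥ (Rinv *ᵥ (Bᵀ *ᵥ v)) = v ⬝ᵥ (S *ᵥ v) := by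
      rw [hS, ← Matrix.mulVec_mulVec, ← Matrix.mulVec_mulVec,
        Matrix.dotProduct_mulVec v B, ← Matrix.mulVec_transpose]
    have h2 : v ⬝ᵥ (S *ᵥ v) = sbar ⬝ᵥ (Rinv *ᵥ (Bᵀ *ᵥ v)) := by
      rw [hSv, Matrix.dotProduct_mulVec v B, ← Matrix.mulVec_transpose, hsymm]
    rw [h1, h2]
  have expand : u ⬝ᵥ (Rinv *ᵥ u)
      = sbar ⬝ᵥ (Rinv *ᵥ sbar) - sbar ⬝ᵥ (Rinv *ᵥ (Bᵀ *ᵥ v)) := by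
    rw [hu, Matrix.mulVec_sub, dotProduct_sub, sub_dotProduct, sub_dotProduct, key,
      hsymm (Bᵀ *ᵥ v) sbar]
    ring
  have hpos : 0 < u ⬝ᵥ (Rinv *ᵥ u) := by simpa using hRpd.dotProduct_mulVec_pos hune
  constructor
  · rw [hMs]; linarith
  · rw [Matrix.sub_mulVec, dotProduct_sub, hMs]; linarith
end

section
/- Let R̄ be a real symmetric positive definite d×d matrix, B a real m×d matrix with B·R̄⁻¹·Bᵀ invertible, s̄ ∈ ℝ^d and c ∈ ℝ. Set R̂ := (B·R̄⁻¹·Bᵀ)⁻¹, ŝ := R̄⁻¹·Bᵀ·R̂·𝟏, and α := −s̄ᵀ·(R̄⁻¹ − R̄⁻¹·Bᵀ·R̂·B·R̄⁻¹)·s̄, and assume α ≠ 0. Define μ := (s̄ᵀ·ŝ − c)/α and s* := μ·R̄⁻¹·(I − Bᵀ·R̂·B·R̄⁻¹)·s̄ + ŝ. Then B·s* = 𝟏, s̄ᵀ·s* = c, and there exists v ∈ ℝ^m such that R̄·s* + Bᵀ·v = μ·s̄ (namely v = μ·R̂·B·R̄⁻¹·s̄ − R̂·𝟏). -/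
open Matrix

/-- Eqs. (42)–(45) of the paper: the closed-form solution of the KKT
system when the spectral inequality constraint is active: `s* = μR̄⁻¹(I − BᵀR̂BR̄⁻¹)s̄ + ŝ`
satisfies `Bs* = 𝟏`, `s̄ᵀs* = c`, and stationarity `R̄s* + Bᵀv = μs̄` with
`v = μR̂BR̄⁻¹s̄ − R̂𝟏`. -/
theorem stmt_10 (d m : ℕ) (Rbar : Matrix (Fin d) (Fin d) ℝ) (hR : Rbar.PosDef)
    (B : Matrix (Fin m) (Fin d) ℝ) (hB : IsUnit (B * Rbar⁻¹ * Bᵀ))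
    (sbar : Fin d → ℝ) (c : ℝ)
    (Rhat : Matrix (Fin m) (Fin m) ℝ) (hRhat : Rhat = (B * Rbar⁻¹ * Bᵀ)⁻¹)
    (shat : Fin d → ℝ) (hshat : shat = (Rbar⁻¹ * Bᵀ * Rhat) *ᵥ (fun _ => 1))
    (α : ℝ)
    (hα : α = -(sbar ⬝ᵥ ((Rbar⁻¹ - Rbar⁻¹ * Bᵀ * Rhat * B * Rbar⁻¹) *ᵥ sbar)))
    (hα0 : α ≠ 0)
    (μ : ℝ) (hμ : μ = (sbar ⬝ᵥ shat - c) / α)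
    (sstar : Fin d → ℝ)
    (hsstar : sstar =
      μ • ((Rbar⁻¹ * ((1 : Matrix (Fin d) (Fin d) ℝ) - Bᵀ * Rhat * B * Rbar⁻¹)) *ᵥ sbar)
        + shat) :
    B *ᵥ sstar = (fun _ => 1) ∧
    sbar ⬝ᵥ sstar = c ∧
    Rbar *ᵥ sstar + Bᵀ *ᵥ (μ • ((Rhat * B * Rbar⁻¹) *ᵥ sbar) - Rhat *ᵥ (fun _ => 1))
      = μ • sbar := by
  have hRdet : IsUnit Rbar.det := isUnit_iff_ne_zero.mpr (ne_of_gt hR.det_pos)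
  have hRinv : Rbar * Rbar⁻¹ = 1 := Matrix.mul_nonsing_inv _ hRdet
  have hKdet : IsUnit (B * Rbar⁻¹ * Bᵀ).det := (Matrix.isUnit_iff_isUnit_det _).mp hB
  have hK1 : (B * Rbar⁻¹ * Bᵀ) * Rhat = 1 := by
    rw [hRhat]; exact Matrix.mul_nonsing_inv _ hKdet
  have hBM : B * (Rbar⁻¹ * ((1 : Matrix (Fin d) (Fin d) ℝ) - Bᵀ * Rhat * B * Rbar⁻¹)) = 0 := by
    have h : B * (Rbar⁻¹ * ((1 : Matrix (Fin d) (Fin d) ℝ) - Bᵀ * Rhat * B * Rbar⁻¹))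
        = B * Rbar⁻¹ - ((B * Rbar⁻¹ * Bᵀ) * Rhat) * (B * Rbar⁻¹) := by
      simp [Matrix.mul_sub, Matrix.mul_one, Matrix.mul_assoc]
    rw [h, hK1, Matrix.one_mul, sub_self]
  have hBshat : B *ᵥ shat = (fun _ => 1) := by
    rw [hshat, Matrix.mulVec_mulVec]
    have h : B * (Rbar⁻¹ * Bᵀ * Rhat) = 1 := by
      rw [← hK1]; simp [Matrix.mul_assoc]
    rw [h, Matrix.one_mulVec]
  have h1 : B *ᵥ sstar = (fun _ => 1) := by
    rw [hsstar, Matrix.mulVec_add, Matrix.mulVec_smul, Matrix.mulVec_mulVec, hBM,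
      Matrix.zero_mulVec, smul_zero, zero_add, hBshat]
  refine ⟨h1, ?_, ?_⟩
  · have hMeq : Rbar⁻¹ * ((1 : Matrix (Fin d) (Fin d) ℝ) - Bᵀ * Rhat * B * Rbar⁻¹)
        = Rbar⁻¹ - Rbar⁻¹ * Bᵀ * Rhat * B * Rbar⁻¹ := by
      simp [Matrix.mul_sub, Matrix.mul_one, Matrix.mul_assoc]
    rw [hsstar, dotProduct_add, dotProduct_smul, hMeq]
    have hdp : sbar ⬝ᵥ ((Rbar⁻¹ - Rbar⁻¹ * Bᵀ * Rhat * B * Rbar⁻¹) *ᵥ sbar) = -α := by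
      rw [hα]; ring
    rw [hdp, hμ, smul_eq_mul]
    field_simp
    ring
  · have hRM : Rbar * (Rbar⁻¹ * ((1 : Matrix (Fin d) (Fin d) ℝ) - Bᵀ * Rhat * B * Rbar⁻¹))
        = 1 - Bᵀ * Rhat * B * Rbar⁻¹ := by
      rw [← Matrix.mul_assoc, hRinv, Matrix.one_mul]
    have hRshat : Rbar *ᵥ shat = (Bᵀ * Rhat) *ᵥ (fun _ => 1) := by
      rw [hshat, Matrix.mulVec_mulVec]
      have h : Rbar * (Rbar⁻¹ * Bᵀ * Rhat) = Bᵀ * Rhat := by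
        rw [show Rbar⁻¹ * Bᵀ * Rhat = Rbar⁻¹ * (Bᵀ * Rhat) from Matrix.mul_assoc _ _ _,
          ← Matrix.mul_assoc, hRinv, Matrix.one_mul]
      rw [h]
    rw [hsstar, Matrix.mulVec_add, Matrix.mulVec_smul, Matrix.mulVec_mulVec, hRM, hRshat,
      Matrix.mulVec_sub, Matrix.mulVec_smul, Matrix.mulVec_mulVec, Matrix.mulVec_mulVec]
    have hassoc : Bᵀ * (Rhat * B * Rbar⁻¹) = Bᵀ * Rhat * B * Rbar⁻¹ := by
      simp [Matrix.mul_assoc]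
    rw [hassoc, Matrix.sub_mulVec, Matrix.one_mulVec, smul_sub]
    abel
end
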